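/- Let G' be a torsion abelian group, G an abelian group, and β : G' → Hom(G, ℚ/ℤ) an injective homomorphism of abelian groups into the group of additive homomorphisms from G to ℚ/ℤ. Endow ℚ/ℤ with the discrete topology and endow G with the weak topology induced by G', namely the coarsest topology on G for which the map β(f) : G → ℚ/ℤ is continuous for every f ∈ G' (the initial topology with respect to the family (β(f))_{f ∈ G'}). Then β is a bijection from G' onto the group of continuous homomorphisms G → ℚ/ℤ: every additive homomorphism h : G → ℚ/ℤ that is continuous for this topology is of the form h = β(f) for a unique f ∈ G'. -/

import Mathlib

open Topology

private lemma torsion_rep (n : ℕ) (hn : n ≠ 0) (a : AddCircle (1 : ℚ)) (ha : n • a = 0) :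
    ∃ z : ℤ, a = z • (((n : ℚ)⁻¹ : ℚ) : AddCircle (1 : ℚ)) := by
  induction a using QuotientAddGroup.induction_on with
  | H q =>
    rw [← QuotientAddGroup.mk_nsmul, QuotientAddGroup.eq_zero_iff,
      AddSubgroup.mem_zmultiples_iff] at ha
    obtain ⟨z, hz⟩ := ha
    refine ⟨z, ?_⟩
    rw [← QuotientAddGroup.mk_zsmul]
    congr 1
    have hn' : (n : ℚ) ≠ 0 := Nat.cast_ne_zero.mpr hn
    have : (z : ℚ) = n * q := by
      simpa [zsmul_eq_mul, nsmul_eq_mul] using hz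
    simp only [zsmul_eq_mul]
    field_simp
    linarith [this]

private lemma endo_torsion (c : AddCircle (1 : ℚ) →+ AddCircle (1 : ℚ)) {n : ℕ} (hn : n ≠ 0) :
    ∃ m : ℤ, ∀ a : AddCircle (1 : ℚ), n • a = 0 → c a = m • a := by
  have hu : n • (((n : ℚ)⁻¹ : ℚ) : AddCircle (1 : ℚ)) = 0 := by
    rw [← QuotientAddGroup.mk_nsmul, QuotientAddGroup.eq_zero_iff,
      AddSubgroup.mem_zmultiples_iff]
    exact ⟨1, by simp [nsmul_eq_mul, hn]⟩
  have hcu : n • c (((n : ℚ)⁻¹ : ℚ) : AddCircle (1 : ℚ)) = 0 := by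
    rw [← map_nsmul, hu, map_zero]
  obtain ⟨m, hm⟩ := torsion_rep n hn _ hcu
  refine ⟨m, fun a ha => ?_⟩
  obtain ⟨z, rfl⟩ := torsion_rep n hn a ha
  rw [map_zsmul, hm, smul_comm]

/-- Let `G'` be a torsion abelian group, `G` an abelian group, and
`β : G' → Hom(G, ℚ/ℤ)` an injective homomorphism.  Endow `ℚ/ℤ` with the discrete
topology and `G` with the weak topology induced by `G'` (the initial topology with
respect to the family `(β f)_{f ∈ G'}`).  Then `β` is a bijection from `G'` onto the
group of continuous homomorphisms `G → ℚ/ℤ`: every additive homomorphism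
`h : G → ℚ/ℤ` continuous for this topology equals `β f` for a unique `f ∈ G'`. -/
theorem weak_topology_dual_eq
    (G' G : Type*) [AddCommGroup G'] [AddCommGroup G]
    (htor : AddMonoid.IsTorsion G')
    (β : G' →+ (G →+ AddCircle (1 : ℚ)))
    (hβ : Function.Injective β) :
    ∀ h : G →+ AddCircle (1 : ℚ),
      Continuous[(⨅ f : G', TopologicalSpace.induced (β f) ⊥), ⊥] (⇑h) →
      ∃! f : G', β f = h := by
  classical
  intro h hcont
  letI tG : TopologicalSpace G := ⨅ f : G', TopologicalSpace.induced (β f) ⊥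
  -- Step 1: find a finite set I ⊆ G' with ⋂_{f ∈ I} ker (β f) ⊆ ker h.
  have hopen : IsOpen (⇑h ⁻¹' {0}) :=
    @Continuous.isOpen_preimage _ _ tG ⊥ _ hcont {0}
      (@isOpen_discrete (AddCircle (1 : ℚ)) ⊥ (@DiscreteTopology.mk _ ⊥ rfl) {0})
  have hmem : (⇑h ⁻¹' {0}) ∈ @nhds G tG 0 := hopen.mem_nhds (by simp)
  rw [show tG = ⨅ f : G', TopologicalSpace.induced (β f) ⊥ from rfl, nhds_iInf] at hmem
  simp only [nhds_induced, map_zero, @nhds_discrete _ ⊥ ⟨rfl⟩] at hmem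
  rw [Filter.mem_iInf] at hmem
  obtain ⟨I, hIfin, V, hV, hEq⟩ := hmem
  haveI : Fintype I := hIfin.fintype
  have hker : ∀ x : G, (∀ i : I, β i x = 0) → h x = 0 := by
    intro x hx
    have : x ∈ ⋂ i : I, V i := by
      refine Set.mem_iInter.mpr fun i => ?_
      obtain ⟨U, hU0, hUsub⟩ := Filter.mem_comap.mp (hV i)
      exact hUsub (by simpa [hx i] using Filter.mem_pure.mp hU0)
    rw [← hEq] at this
    simpa using this
  -- Step 2: extend h along the injection G/ker Φ ↪ ∏ (ℚ/ℤ).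
  let Φ : G →+ (I → AddCircle (1 : ℚ)) :=
    { toFun := fun x i => β i x
      map_zero' := by ext i; simp
      map_add' := fun x y => by ext i; simp }
  let K : AddSubgroup G := Φ.ker
  let Φbar := QuotientAddGroup.kerLift Φ
  have hΦinj : Function.Injective Φbar := QuotientAddGroup.kerLift_injective Φ
  let hbar : G ⧸ K →+ AddCircle (1 : ℚ) :=
    QuotientAddGroup.lift K h (by
      intro x hx
      refine hker x fun i => ?_
      have : Φ x = 0 := hx
      exact congrFun this i)
  obtain ⟨ψ, hψ⟩ := CharacterModule.dual_surjective_of_injective (R := ℤ)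
    Φbar.toIntLinearMap hΦinj (hbar : CharacterModule (G ⧸ K))
  let ψ' : (I → AddCircle (1 : ℚ)) →+ AddCircle (1 : ℚ) := ψ
  have hψ' : ∀ x : G, ψ' (Φ x) = h x := fun x => DFunLike.congr_fun hψ (x : G ⧸ K)
  -- Step 3: decompose ψ' over the finite product using torsion orders.
  have hm : ∀ i : I, ∃ m : ℤ, ∀ x : G, ψ' (Pi.single i (β i x)) = m • β (i : G') x := by
    intro i
    have hn : addOrderOf (i : G') ≠ 0 := (htor (i : G')).addOrderOf_pos.ne'
    obtain ⟨m, hm⟩ := endo_torsion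
      (ψ'.comp (AddMonoidHom.single (fun _ : I => AddCircle (1 : ℚ)) i)) hn
    refine ⟨m, fun x => ?_⟩
    have htors : addOrderOf (i : G') • β (i : G') x = 0 := by
      have : addOrderOf (i : G') • β (i : G') = 0 := by
        rw [← map_nsmul, addOrderOf_nsmul_eq_zero, map_zero]
      calc addOrderOf (i : G') • β (i : G') x
          = (addOrderOf (i : G') • β (i : G')) x := by simp
        _ = 0 := by rw [this]; rfl
    simpa [AddMonoidHom.single_apply] using hm (β (i : G') x) htors
  choose m hmspec using hm
  have key : β (∑ i : I, m i • (i : G')) = h := by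
    ext x
    have hdecomp : Φ x = ∑ i : I, Pi.single i (β (i : G') x) := by
      symm
      exact Finset.univ_sum_single (Φ x)
    calc β (∑ i : I, m i • (i : G')) x
        = ∑ i : I, m i • β (i : G') x := by
          rw [map_sum]
          simp [AddMonoidHom.finset_sum_apply]
      _ = ∑ i : I, ψ' (Pi.single i (β (i : G') x)) := by
          refine Finset.sum_congr rfl fun i _ => (hmspec i x).symm
      _ = ψ' (Φ x) := by rw [hdecomp, map_sum]
      _ = h x := hψ' x
  exact ⟨∑ i : I, m i • (i : G'), key, fun g hg => hβ (hg.trans key.symm)⟩
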